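/- Elliptical potential lemma for matrices. Let d ≥ 1 and T ≥ 1 be integers, λ > 0, L > 0. Let X_1,…,X_T be real symmetric positive semidefinite d×d matrices with trace(X_t) ≤ L for every t, and set U_0 = λ·I_d and U_t = U_{t−1} + X_t for t = 1,…,T. Then each U_{t−1} is positive definite (hence invertible), and: (i) Σ_{t=1}^T √(trace(U_{t−1}⁻¹·X_t)) ≤ √( ((L·T/λ) / log(1 + L/λ)) · d·log(1 + L·T/(λ·d)) ); and (ii) Σ_{t=1}^T trace(U_{t−1}⁻¹·X_t) ≤ ((L/λ) / log(1 + L/λ)) · d·log(1 + L·T/(λ·d)). -/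

import Mathlib

open Finset

noncomputable section

/-- `U_t = λ·I_d + Σ_{i<t} X_i`. -/
def Umat (d : ℕ) (lam : ℝ) (X : ℕ → Matrix (Fin d) (Fin d) ℝ) (t : ℕ) :
    Matrix (Fin d) (Fin d) ℝ :=
  lam • (1 : Matrix (Fin d) (Fin d) ℝ) + ∑ i ∈ Finset.range t, X i

namespace EllipticalAux

open Matrix

variable {d : ℕ}

lemma psd_trace_nonneg {M : Matrix (Fin d) (Fin d) ℝ} (h : M.PosSemidef) : 0 ≤ M.trace := by
  refine Finset.sum_nonneg fun i _ => ?_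
  have := h.dotProduct_mulVec_nonneg (Pi.single i 1)
  simpa [Matrix.mulVec_single, dotProduct, Pi.single_apply] using this

open scoped MatrixOrder in
lemma psd_eq_conjTranspose_mul_self {A : Matrix (Fin d) (Fin d) ℝ} (hA : A.PosSemidef) :
    ∃ B : Matrix (Fin d) (Fin d) ℝ, A = Bᴴ * B := by
  have h0 : 0 ≤ A := Matrix.nonneg_iff_posSemidef.mpr hA
  refine ⟨CFC.sqrt A, ?_⟩
  rw [show (CFC.sqrt A)ᴴ = star (CFC.sqrt A) from rfl, (CFC.sqrt_nonneg A).isSelfAdjoint.star_eq,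
    CFC.sqrt_mul_sqrt_self A h0]

lemma trace_mul_psd_nonneg {A B : Matrix (Fin d) (Fin d) ℝ} (hA : A.PosSemidef)
    (hB : B.PosSemidef) : 0 ≤ (A * B).trace := by
  obtain ⟨C, rfl⟩ := psd_eq_conjTranspose_mul_self hA
  rw [Matrix.mul_assoc, Matrix.trace_mul_comm]
  exact psd_trace_nonneg (hB.mul_mul_conjTranspose_same C)

lemma psd_smul {c : ℝ} {M : Matrix (Fin d) (Fin d) ℝ} (hc : 0 ≤ c) (hM : M.PosSemidef) :
    (c • M).PosSemidef := by
  refine Matrix.PosSemidef.of_dotProduct_mulVec_nonneg ?_ fun x => ?_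
  · unfold Matrix.IsHermitian
    rw [conjTranspose_smul, hM.1]
    simp
  · rw [smul_mulVec, dotProduct_smul, smul_eq_mul]
    exact mul_nonneg hc (hM.dotProduct_mulVec_nonneg x)

lemma posDef_smul_one_add {lam : ℝ} (hlam : 0 < lam) {S : Matrix (Fin d) (Fin d) ℝ}
    (hS : S.PosSemidef) : (lam • (1 : Matrix (Fin d) (Fin d) ℝ) + S).PosDef := by
  refine Matrix.PosDef.add_posSemidef (Matrix.PosDef.of_dotProduct_mulVec_pos (psd_smul hlam.le Matrix.PosSemidef.one).1
    fun x hx => ?_) hS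
  rw [smul_mulVec, dotProduct_smul, smul_eq_mul, one_mulVec]
  have hs : star x = x := by simp
  rw [hs]
  refine mul_pos hlam ?_
  rcases lt_or_eq_of_le (Finset.sum_nonneg (fun i _ => mul_self_nonneg (x i))) with h | h
  · exact h
  · exact absurd (dotProduct_self_eq_zero.mp h.symm) hx

lemma inv_loewner_bound {lam : ℝ} (hlam : 0 < lam) {S : Matrix (Fin d) (Fin d) ℝ}
    (hS : S.PosSemidef) :
    ((lam⁻¹ • (1 : Matrix (Fin d) (Fin d) ℝ)) -
      (lam • (1 : Matrix (Fin d) (Fin d) ℝ) + S)⁻¹).PosSemidef := by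
  set U : Matrix (Fin d) (Fin d) ℝ := lam • (1 : Matrix (Fin d) (Fin d) ℝ) + S with hUdef
  have hU : U.PosDef := posDef_smul_one_add hlam hS
  have hUinv : (U⁻¹).PosDef := hU.inv
  have hsymmT : Uᵀ = U := hU.isHermitian
  have hquad : ∀ v : Fin d → ℝ, lam * (v ⬝ᵥ U⁻¹ *ᵥ v) ≤ v ⬝ᵥ v := by
    intro v
    set w : Fin d → ℝ := U⁻¹ *ᵥ v with hw
    have hv : U *ᵥ w = v := by
      rw [hw, Matrix.mulVec_mulVec, Matrix.mul_nonsing_inv _ (isUnit_iff_ne_zero.2 hU.det_pos.ne'),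
        Matrix.one_mulVec]
    have h0 : U *ᵥ w = w ᵥ* U := by
      nth_rewrite 1 [← hsymmT]; exact Matrix.mulVec_transpose U w
    have h1 : v ⬝ᵥ U⁻¹ *ᵥ v = w ⬝ᵥ U *ᵥ w := by
      calc v ⬝ᵥ U⁻¹ *ᵥ v = v ⬝ᵥ w := rfl
        _ = (U *ᵥ w) ⬝ᵥ w := by rw [hv]
        _ = (w ᵥ* U) ⬝ᵥ w := by rw [h0]
        _ = w ⬝ᵥ U *ᵥ w := (Matrix.dotProduct_mulVec w U w).symm
    have h2 : v ⬝ᵥ v = w ⬝ᵥ (U * U) *ᵥ w := by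
      calc v ⬝ᵥ v = (U *ᵥ w) ⬝ᵥ (U *ᵥ w) := by rw [hv]
        _ = (w ᵥ* U) ⬝ᵥ (U *ᵥ w) := by rw [h0]
        _ = ((w ᵥ* U) ᵥ* U) ⬝ᵥ w := Matrix.dotProduct_mulVec _ U w
        _ = (w ᵥ* (U * U)) ⬝ᵥ w := by rw [Matrix.vecMul_vecMul]
        _ = w ⬝ᵥ (U * U) *ᵥ w := by rw [← Matrix.dotProduct_mulVec]
    have hDpsd : (lam • S + S * S).PosSemidef := by
      refine Matrix.PosSemidef.add (psd_smul hlam.le hS) ?_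
      rw [← pow_two]
      exact hS.pow 2
    have hDid : U * U - lam • U = lam • S + S * S := by
      rw [hUdef]
      simp only [Matrix.add_mul, Matrix.mul_add, Matrix.smul_mul, Matrix.mul_smul,
        Matrix.one_mul, Matrix.mul_one, smul_add, smul_smul]
      abel
    have hkey := hDpsd.dotProduct_mulVec_nonneg w
    rw [show star w = w by simp] at hkey
    rw [← hDid, Matrix.sub_mulVec, dotProduct_sub, Matrix.smul_mulVec,
      dotProduct_smul, smul_eq_mul, sub_nonneg] at hkey
    rw [h1, h2]
    exact hkey
  refine Matrix.PosSemidef.of_dotProduct_mulVec_nonneg ?_ fun x => ?_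
  · unfold Matrix.IsHermitian
    rw [conjTranspose_sub, conjTranspose_smul, conjTranspose_one, hUinv.isHermitian]
    simp
  · rw [show star x = x by simp, Matrix.sub_mulVec, dotProduct_sub,
      Matrix.smul_mulVec, dotProduct_smul, smul_eq_mul, one_mulVec, sub_nonneg]
    have h3 := hquad x
    calc x ⬝ᵥ U⁻¹ *ᵥ x = lam⁻¹ * (lam * (x ⬝ᵥ U⁻¹ *ᵥ x)) := by field_simp
      _ ≤ lam⁻¹ * (x ⬝ᵥ x) := mul_le_mul_of_nonneg_left h3 (by positivity)

lemma trace_eq_sum_eigs {P : Matrix (Fin d) (Fin d) ℝ} (h : P.IsHermitian) :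
    P.trace = ∑ i, h.eigenvalues i := by
  nth_rewrite 1 [h.spectral_theorem]
  rw [Unitary.conjStarAlgAut_apply, Matrix.trace_mul_cycle,
    Matrix.UnitaryGroup.star_mul_self, Matrix.one_mul, Matrix.trace_diagonal]
  simp [RCLike.ofReal_real_eq_id]

lemma det_eq_prod_shift {P : Matrix (Fin d) (Fin d) ℝ} (h : P.IsHermitian) :
    (1 + P).det = ∏ i, (1 + h.eigenvalues i) := by
  have key : 1 + P = (h.eigenvectorUnitary : Matrix (Fin d) (Fin d) ℝ) *
      (1 + diagonal (RCLike.ofReal ∘ h.eigenvalues)) *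
      (star (h.eigenvectorUnitary : Matrix (Fin d) (Fin d) ℝ)) := by
    rw [Matrix.mul_add, Matrix.add_mul, Matrix.mul_one]
    have h1 : (h.eigenvectorUnitary : Matrix (Fin d) (Fin d) ℝ) *
        star (h.eigenvectorUnitary : Matrix (Fin d) (Fin d) ℝ) = 1 :=
      h.eigenvectorUnitary.prop.2
    rw [h1]
    congr 1
    exact h.spectral_theorem.trans (Unitary.conjStarAlgAut_apply _ _)
  rw [key, Matrix.det_mul, Matrix.det_mul, mul_comm, ← mul_assoc, ← Matrix.det_mul,
    Matrix.UnitaryGroup.star_mul_self, Matrix.det_one, one_mul]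
  have : (1 : Matrix (Fin d) (Fin d) ℝ) + diagonal (RCLike.ofReal ∘ h.eigenvalues) =
      diagonal (fun i => 1 + h.eigenvalues i) := by
    rw [← Matrix.diagonal_one, Matrix.diagonal_add]
    rfl
  rw [this, Matrix.det_diagonal]

lemma one_add_sum_le_prod {ι : Type*} (s : Finset ι) (f : ι → ℝ) (hf : ∀ i ∈ s, 0 ≤ f i) :
    1 + ∑ i ∈ s, f i ≤ ∏ i ∈ s, (1 + f i) := by
  classical
  induction s using Finset.cons_induction with
  | empty => simp
  | cons a s ha ih =>
    rw [Finset.sum_cons, Finset.prod_cons]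
    have h1 : 0 ≤ f a := hf a (Finset.mem_cons_self a s)
    have h2 : ∀ i ∈ s, 0 ≤ f i := fun i hi => hf i (Finset.mem_cons_of_mem hi)
    have h3 := ih h2
    have h4 : 0 ≤ ∑ i ∈ s, f i := Finset.sum_nonneg h2
    nlinarith [Finset.sum_nonneg h2]

lemma det_one_add_inv_mul {U X : Matrix (Fin d) (Fin d) ℝ} (hU : U.PosDef) (hX : X.PosSemidef) :
    1 + (U⁻¹ * X).trace ≤ (1 + U⁻¹ * X).det := by
  obtain ⟨C, hC⟩ := psd_eq_conjTranspose_mul_self hU.inv.posSemidef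
  have hM : (C * X * Cᴴ).PosSemidef := hX.mul_mul_conjTranspose_same C
  have htr : (U⁻¹ * X).trace = (C * X * Cᴴ).trace := by
    rw [hC, Matrix.mul_assoc, Matrix.trace_mul_comm]
  have hdet : (1 + U⁻¹ * X).det = (1 + C * X * Cᴴ).det := by
    rw [hC, Matrix.mul_assoc, Matrix.det_one_add_mul_comm]
  rw [htr, hdet, det_eq_prod_shift hM.1, trace_eq_sum_eigs hM.1]
  exact one_add_sum_le_prod _ _ (fun i _ => hM.eigenvalues_nonneg i)

lemma log_det_le {P : Matrix (Fin d) (Fin d) ℝ} (hP : P.PosDef) {c : ℝ} (hc : P.trace = c * d)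
    (hcpos : 0 < c) : Real.log P.det ≤ d * Real.log c := by
  have heig := hP.eigenvalues_pos
  rw [hP.isHermitian.det_eq_prod_eigenvalues]
  simp only [RCLike.ofReal_real_eq_id, id_eq]
  rw [Real.log_prod (fun i _ => (heig i).ne')]
  have key : ∀ i : Fin d, Real.log (hP.isHermitian.eigenvalues i) ≤
      hP.isHermitian.eigenvalues i / c - 1 + Real.log c := by
    intro i
    have h1 : Real.log (hP.isHermitian.eigenvalues i / c) ≤ hP.isHermitian.eigenvalues i / c - 1 :=
      Real.log_le_sub_one_of_pos (div_pos (heig i) hcpos)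
    rw [Real.log_div (heig i).ne' hcpos.ne'] at h1
    linarith
  calc ∑ i, Real.log (hP.isHermitian.eigenvalues i)
      ≤ ∑ i : Fin d, (hP.isHermitian.eigenvalues i / c - 1 + Real.log c) :=
        Finset.sum_le_sum fun i _ => key i
    _ = (∑ i, hP.isHermitian.eigenvalues i) / c - d + d * Real.log c := by
        rw [Finset.sum_add_distrib, Finset.sum_sub_distrib, ← Finset.sum_div]
        simp [mul_comm]
    _ = d * Real.log c := by
        rw [← trace_eq_sum_eigs hP.isHermitian, hc]
        field_simp
        ring

lemma xlog_le {a x : ℝ} (ha : 0 < a) (hx0 : 0 ≤ x) (hxa : x ≤ a) :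
    x * Real.log (1 + a) ≤ a * Real.log (1 + x) := by
  have hcc : ConcaveOn ℝ (Set.Ioi 0) Real.log := strictConcaveOn_log_Ioi.concaveOn
  have h1 : (1 : ℝ) ∈ Set.Ioi (0:ℝ) := by norm_num
  have h2 : (1 + a) ∈ Set.Ioi (0:ℝ) := by simp; linarith
  have hb : (0:ℝ) ≤ 1 - x / a := by
    rw [sub_nonneg]; exact div_le_one_of_le₀ hxa ha.le
  have hc : (0:ℝ) ≤ x / a := by positivity
  have habc : (1 - x / a) + x / a = 1 := by ring
  have key := hcc.2 h1 h2 hb hc habc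
  simp only [smul_eq_mul, mul_one, Real.log_one, mul_zero, zero_add] at key
  have heq : 1 - x / a + x / a * (1 + a) = 1 + x := by field_simp; ring
  rw [heq] at key
  have h3 := mul_le_mul_of_nonneg_left key ha.le
  calc x * Real.log (1 + a) = a * (x / a * Real.log (1 + a)) := by field_simp
    _ ≤ a * Real.log (1 + x) := h3

end EllipticalAux

open EllipticalAux Matrix

/-- Elliptical potential lemma for matrices. -/
theorem elliptical_potential_matrices
    (d T : ℕ) (hd : 1 ≤ d) (hT : 1 ≤ T) (lam L : ℝ) (hlam : 0 < lam) (hL : 0 < L)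
    (X : ℕ → Matrix (Fin d) (Fin d) ℝ)
    (hX : ∀ t < T, (X t).PosSemidef)
    (htr : ∀ t < T, (X t).trace ≤ L) :
    (∀ t < T, (Umat d lam X t).PosDef) ∧
    (∑ t ∈ Finset.range T, Real.sqrt (((Umat d lam X t)⁻¹ * X t).trace) ≤
      Real.sqrt ((L * T / lam / Real.log (1 + L / lam)) *
        ((d : ℝ) * Real.log (1 + L * T / (lam * d))))) ∧
    (∑ t ∈ Finset.range T, ((Umat d lam X t)⁻¹ * X t).trace ≤
      (L / lam / Real.log (1 + L / lam)) *
        ((d : ℝ) * Real.log (1 + L * T / (lam * d)))) := by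
  have hdpos : (0:ℝ) < d := by exact_mod_cast hd
  have hTpos : (0:ℝ) < T := by exact_mod_cast hT
  -- sums of X are psd
  have hS : ∀ t ≤ T, (∑ i ∈ Finset.range t, X i).PosSemidef := by
    intro t ht
    induction t with
    | zero => simpa using Matrix.PosSemidef.zero
    | succ n ih =>
      rw [Finset.sum_range_succ]
      exact (ih (Nat.le_of_succ_le ht)).add (hX n (Nat.lt_of_succ_le ht))
  have hU : ∀ t ≤ T, (Umat d lam X t).PosDef := fun t ht =>
    posDef_smul_one_add hlam (hS t ht)
  set x : ℕ → ℝ := fun t => ((Umat d lam X t)⁻¹ * X t).trace with hxdef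
  have hx0 : ∀ t < T, 0 ≤ x t := fun t ht =>
    trace_mul_psd_nonneg (hU t ht.le).inv.posSemidef (hX t ht)
  -- upper bound x t ≤ L / lam
  have hxa : ∀ t < T, x t ≤ L / lam := by
    intro t ht
    have hP := inv_loewner_bound hlam (hS t ht.le)
    have h0 := trace_mul_psd_nonneg hP (hX t ht)
    rw [Matrix.sub_mul, Matrix.trace_sub, Matrix.smul_mul, Matrix.one_mul,
      Matrix.trace_smul, smul_eq_mul, sub_nonneg] at h0
    have : x t ≤ lam⁻¹ * (X t).trace := h0
    calc x t ≤ lam⁻¹ * (X t).trace := h0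
      _ ≤ lam⁻¹ * L := mul_le_mul_of_nonneg_left (htr t ht) (by positivity)
      _ = L / lam := by rw [inv_mul_eq_div]
  -- the log-det telescoping bound
  have hdetpos : ∀ t ≤ T, 0 < (Umat d lam X t).det := fun t ht => (hU t ht).det_pos
  have hstep : ∀ t < T, Real.log (1 + x t) ≤
      Real.log (Umat d lam X (t+1)).det - Real.log (Umat d lam X t).det := by
    intro t ht
    have hUt := hU t ht.le
    have hdet1 : (Umat d lam X (t+1)).det =
        (Umat d lam X t).det * (1 + (Umat d lam X t)⁻¹ * X t).det := by
      rw [← Matrix.det_mul]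
      congr 1
      rw [Matrix.mul_add, Matrix.mul_one, ← Matrix.mul_assoc,
        Matrix.mul_nonsing_inv _ (isUnit_iff_ne_zero.2 hUt.det_pos.ne'), Matrix.one_mul]
      show Umat d lam X (t+1) = _
      unfold Umat
      rw [Finset.sum_range_succ, add_assoc]
    have hge : 1 + x t ≤ (1 + (Umat d lam X t)⁻¹ * X t).det :=
      det_one_add_inv_mul hUt (hX t ht)
    have hpos1 : (0:ℝ) < 1 + x t := by linarith [hx0 t ht]
    have hlog1 : Real.log (1 + x t) ≤ Real.log (1 + (Umat d lam X t)⁻¹ * X t).det :=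
      Real.log_le_log hpos1 hge
    rw [hdet1, Real.log_mul hUt.det_pos.ne' (by linarith : (0:ℝ) < (1 + (Umat d lam X t)⁻¹ * X t).det).ne']
    linarith
  have htele : ∑ t ∈ Finset.range T, Real.log (1 + x t) ≤
      Real.log (Umat d lam X T).det - Real.log (Umat d lam X 0).det := by
    calc ∑ t ∈ Finset.range T, Real.log (1 + x t)
        ≤ ∑ t ∈ Finset.range T,
          (Real.log (Umat d lam X (t+1)).det - Real.log (Umat d lam X t).det) :=
          Finset.sum_le_sum fun t ht => hstep t (Finset.mem_range.mp ht)
      _ = _ := Finset.sum_range_sub (fun t => Real.log (Umat d lam X t).det) T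
  -- log det U_0
  have hdet0 : Real.log (Umat d lam X 0).det = d * Real.log lam := by
    unfold Umat
    rw [Finset.sum_range_zero, add_zero, Matrix.det_smul, Matrix.det_one, mul_one]
    simp [Real.log_pow]
  -- trace of U_T
  have htrT : (Umat d lam X T).trace ≤ lam * d + L * T := by
    unfold Umat
    rw [Matrix.trace_add, Matrix.trace_smul, Matrix.trace_one, Matrix.trace_sum]
    have : ∑ i ∈ Finset.range T, (X i).trace ≤ ∑ i ∈ Finset.range T, L :=
      Finset.sum_le_sum fun i hi => htr i (Finset.mem_range.mp hi)
    rw [Finset.sum_const, Finset.card_range] at this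
    simp only [smul_eq_mul, Fintype.card_fin, nsmul_eq_mul] at *
    linarith [this]
  have htrT' : lam * d ≤ (Umat d lam X T).trace := by
    unfold Umat
    rw [Matrix.trace_add, Matrix.trace_smul, Matrix.trace_one, Matrix.trace_sum]
    have : 0 ≤ ∑ i ∈ Finset.range T, (X i).trace :=
      Finset.sum_nonneg fun i hi => psd_trace_nonneg (hX i (Finset.mem_range.mp hi))
    simp only [smul_eq_mul, Fintype.card_fin] at *
    linarith
  -- bound on log det U_T
  set c : ℝ := (Umat d lam X T).trace / d with hcdef
  have hclam : lam ≤ c := by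
    rw [hcdef, le_div_iff₀ hdpos]
    linarith [htrT']
  have hcpos : 0 < c := lt_of_lt_of_le hlam hclam
  have hdetT : Real.log (Umat d lam X T).det ≤ d * Real.log c := by
    refine log_det_le (hU T le_rfl) ?_ hcpos
    rw [hcdef]
    field_simp
  have hcle : c ≤ lam * (1 + L * T / (lam * d)) := by
    rw [hcdef, div_le_iff₀ hdpos]
    have : lam * (1 + L * T / (lam * d)) * d = lam * d + L * T := by
      field_simp
    rw [this]
    exact htrT
  have hlogc : Real.log c ≤ Real.log lam + Real.log (1 + L * T / (lam * d)) := by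
    rw [← Real.log_mul hlam.ne' (by positivity : (0:ℝ) < 1 + L * T / (lam * d)).ne']
    exact Real.log_le_log hcpos hcle
  -- the master bound
  set Sb : ℝ := (d : ℝ) * Real.log (1 + L * T / (lam * d)) with hSbdef
  have hSb0 : 0 ≤ Sb := by
    rw [hSbdef]
    have : (0:ℝ) ≤ Real.log (1 + L * T / (lam * d)) :=
      Real.log_nonneg (by nlinarith [div_nonneg (by positivity : (0:ℝ) ≤ L * T) (by positivity : (0:ℝ) ≤ lam * d)])
    positivity
  have hmaster : ∑ t ∈ Finset.range T, Real.log (1 + x t) ≤ Sb := by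
    calc ∑ t ∈ Finset.range T, Real.log (1 + x t)
        ≤ Real.log (Umat d lam X T).det - Real.log (Umat d lam X 0).det := htele
      _ ≤ d * Real.log c - d * Real.log lam := by rw [hdet0]; linarith
      _ ≤ Sb := by rw [hSbdef]; nlinarith [hlogc]
  -- scalar conversion
  set a : ℝ := L / lam with hadef
  have hapos : 0 < a := by positivity
  have hlogapos : 0 < Real.log (1 + a) := Real.log_pos (by linarith)
  have hxle : ∀ t < T, x t ≤ a / Real.log (1 + a) * Real.log (1 + x t) := by
    intro t ht
    have := xlog_le hapos (hx0 t ht) (hxa t ht)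
    rw [div_mul_eq_mul_div, le_div_iff₀ hlogapos]
    linarith
  have hsum3 : ∑ t ∈ Finset.range T, x t ≤ a / Real.log (1 + a) * Sb := by
    calc ∑ t ∈ Finset.range T, x t
        ≤ ∑ t ∈ Finset.range T, a / Real.log (1 + a) * Real.log (1 + x t) :=
          Finset.sum_le_sum fun t ht => hxle t (Finset.mem_range.mp ht)
      _ = a / Real.log (1 + a) * ∑ t ∈ Finset.range T, Real.log (1 + x t) := by
          rw [Finset.mul_sum]
      _ ≤ a / Real.log (1 + a) * Sb :=
          mul_le_mul_of_nonneg_left hmaster (by positivity)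
  refine ⟨fun t ht => hU t ht.le, ?_, ?_⟩
  · -- sqrt part via Cauchy-Schwarz
    have hcs : (∑ t ∈ Finset.range T, Real.sqrt (x t)) ^ 2 ≤
        (T : ℝ) * ∑ t ∈ Finset.range T, x t := by
      have := sq_sum_le_card_mul_sum_sq (s := Finset.range T)
        (f := fun t => Real.sqrt (x t))
      rw [Finset.card_range] at this
      calc (∑ t ∈ Finset.range T, Real.sqrt (x t)) ^ 2
          ≤ (T : ℝ) * ∑ t ∈ Finset.range T, Real.sqrt (x t) ^ 2 := this
        _ = (T : ℝ) * ∑ t ∈ Finset.range T, x t := by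
            congr 1
            refine Finset.sum_congr rfl fun t ht => ?_
            exact Real.sq_sqrt (hx0 t (Finset.mem_range.mp ht))
    have hsnn : 0 ≤ ∑ t ∈ Finset.range T, Real.sqrt (x t) :=
      Finset.sum_nonneg fun t _ => Real.sqrt_nonneg _
    calc ∑ t ∈ Finset.range T, Real.sqrt (x t)
        = Real.sqrt ((∑ t ∈ Finset.range T, Real.sqrt (x t)) ^ 2) :=
          (Real.sqrt_sq hsnn).symm
      _ ≤ Real.sqrt ((L * T / lam / Real.log (1 + L / lam)) * Sb) := by
          refine Real.sqrt_le_sqrt ?_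
          calc (∑ t ∈ Finset.range T, Real.sqrt (x t)) ^ 2
              ≤ (T : ℝ) * ∑ t ∈ Finset.range T, x t := hcs
            _ ≤ (T : ℝ) * (a / Real.log (1 + a) * Sb) :=
                mul_le_mul_of_nonneg_left hsum3 (by positivity)
            _ = (L * T / lam / Real.log (1 + L / lam)) * Sb := by
                rw [hadef]
                field_simp
      _ = Real.sqrt ((L * T / lam / Real.log (1 + L / lam)) *
            ((d : ℝ) * Real.log (1 + L * T / (lam * d)))) := by rw [hSbdef]
  · calc ∑ t ∈ Finset.range T, x t
        ≤ a / Real.log (1 + a) * Sb := hsum3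
      _ = (L / lam / Real.log (1 + L / lam)) *
            ((d : ℝ) * Real.log (1 + L * T / (lam * d))) := by rw [hadef, hSbdef]
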